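/- There exists a finite simple graph G with maximum degree Δ(G) = 3, maximum average degree mad(G) = 36/13, and injective chromatic number χ_i(G) = 6. (An example is the incidence graph of the Fano plane with one vertex deleted.) -/

import Mathlib

open SimpleGraph

/-- An injective coloring of `G`: any two distinct vertices with a common neighbor
receive distinct colors. -/
def IsInjColoring {V α : Type*} (G : SimpleGraph V) (c : V → α) : Prop :=
  ∀ ⦃u v : V⦄, u ≠ v → (∃ w, G.Adj u w ∧ G.Adj v w) → c u ≠ c v

/-- The injective chromatic number of `G`: the least `k` such that `G` has an
injective coloring with `k` colors. -/
noncomputable def injChromNum {V : Type*} (G : SimpleGraph V) : ℕ :=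
  sInf {k | ∃ c : V → Fin k, IsInjColoring G c}

/-! ### The graph: Fano incidence graph minus one point -/

def fanoEdges : List (Fin 13 × Fin 13) :=
  [(0,6),(1,6),(2,6),(0,7),(3,7),(4,7),(0,8),(5,8),(1,9),(3,9),(5,9),
   (1,10),(4,10),(2,11),(3,11),(2,12),(4,12),(5,12)]

def fanoG : SimpleGraph (Fin 13) := SimpleGraph.fromRel (fun u v => (u, v) ∈ fanoEdges)

instance fanoAdjDec : DecidableRel fanoG.Adj := fun u v => by
  unfold fanoG SimpleGraph.fromRel
  exact instDecidableAnd

/-! ### Bitmask machinery for the mad bound -/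

def cntN (m : Nat) : Nat :=
  (m>>>0 &&& m>>>6 &&& 1) + (m>>>1 &&& m>>>6 &&& 1) + (m>>>2 &&& m>>>6 &&& 1) +
  (m>>>0 &&& m>>>7 &&& 1) + (m>>>3 &&& m>>>7 &&& 1) + (m>>>4 &&& m>>>7 &&& 1) +
  (m>>>0 &&& m>>>8 &&& 1) + (m>>>5 &&& m>>>8 &&& 1) + (m>>>1 &&& m>>>9 &&& 1) +
  (m>>>3 &&& m>>>9 &&& 1) + (m>>>5 &&& m>>>9 &&& 1) + (m>>>1 &&& m>>>10 &&& 1) +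
  (m>>>4 &&& m>>>10 &&& 1) + (m>>>2 &&& m>>>11 &&& 1) + (m>>>3 &&& m>>>11 &&& 1) +
  (m>>>2 &&& m>>>12 &&& 1) + (m>>>4 &&& m>>>12 &&& 1) + (m>>>5 &&& m>>>12 &&& 1)

def popN (m : Nat) : Nat :=
  (m>>>0 &&& 1) + (m>>>1 &&& 1) + (m>>>2 &&& 1) + (m>>>3 &&& 1) + (m>>>4 &&& 1) +
  (m>>>5 &&& 1) + (m>>>6 &&& 1) + (m>>>7 &&& 1) + (m>>>8 &&& 1) + (m>>>9 &&& 1) +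
  (m>>>10 &&& 1) + (m>>>11 &&& 1) + (m>>>12 &&& 1)

def checkN (m : Nat) : Bool := Nat.ble (26 * cntN m) (36 * popN m)

def goN : Nat → Nat → Bool
  | lo, 0 => checkN lo
  | lo, d+1 => goN (2*lo) d && goN (2*lo+1) d

set_option maxRecDepth 10000 in
set_option maxHeartbeats 1000000 in
lemma goN_true : goN 0 13 = true := by decide

lemma goN_spec : ∀ (d lo : ℕ), goN lo d = true → ∀ m, m < 2^d → checkN (lo * 2^d + m) = true := by
  intro d
  induction d with
  | zero =>
    intro lo h m hm
    interval_cases m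
    simpa [goN] using h
  | succ d ih =>
    intro lo h m hm
    rw [show goN lo (d+1) = (goN (2*lo) d && goN (2*lo+1) d) from rfl, Bool.and_eq_true] at h
    have hp : 2^(d+1) = 2 * 2^d := by rw [pow_succ]; ring
    by_cases hm' : m < 2^d
    · have := ih (2*lo) h.1 m hm'
      have e : lo * 2^(d+1) + m = 2*lo * 2^d + m := by rw [hp]; ring
      rw [e]; exact this
    · have h2 : m - 2^d < 2^d := by omega
      have := ih (2*lo+1) h.2 (m - 2^d) h2
      have e : lo * 2^(d+1) + m = (2*lo+1) * 2^d + (m - 2^d) := by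
        have h3 : lo * 2^(d+1) = 2 * lo * 2^d := by rw [hp]; ring
        have h4 : (2*lo+1) * 2^d = 2 * lo * 2^d + 2^d := by ring
        omega
      rw [e]; exact this

lemma check_all (m : ℕ) (hm : m < 8192) : 26 * cntN m ≤ 36 * popN m := by
  have h := goN_spec 13 0 goN_true m (by norm_num [hm])
  simp only [Nat.zero_mul, Nat.zero_add] at h
  exact Nat.le_of_ble_eq_true h

/-! ### Bit masks of finsets -/

lemma sum13 (f : Fin 13 → ℕ) : ∑ i, f i =
    f 0 + f 1 + f 2 + f 3 + f 4 + f 5 + f 6 + f 7 + f 8 + f 9 + f 10 + f 11 + f 12 := by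
  simp only [Fin.sum_univ_succ, Fin.sum_univ_zero, add_zero]
  norm_num [show ((0:Fin 12).succ : Fin 13) = 1 from rfl]
  ring_nf
  rfl

def maskOf (S : Finset (Fin 13)) : ℕ := S.fold (· ||| ·) 0 (fun i : Fin 13 => 2 ^ (i : ℕ))

lemma testBit_maskOf (S : Finset (Fin 13)) (j : ℕ) :
    (maskOf S).testBit j = decide (∃ i ∈ S, (i : ℕ) = j) := by
  classical
  induction S using Finset.induction_on with
  | empty => simp [maskOf]
  | @insert a s h ih =>
    rw [maskOf, Finset.fold_insert (op := fun x y : ℕ => x ||| y) h]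
    show ((2:ℕ)^(a:ℕ) ||| maskOf s).testBit j = _
    rw [Nat.testBit_lor, ih, Nat.testBit_two_pow]
    simp only [Finset.mem_insert]
    by_cases hj : (a : ℕ) = j <;> simp [hj]

lemma maskOf_lt (S : Finset (Fin 13)) : maskOf S < 8192 := by
  classical
  induction S using Finset.induction_on with
  | empty => simp [maskOf]
  | @insert a s h ih =>
    rw [maskOf, Finset.fold_insert (op := fun x y : ℕ => x ||| y) h]
    have h1 : 2 ^ (a : ℕ) < 2 ^ 13 := by
      have := a.isLt
      exact Nat.pow_lt_pow_right (by norm_num) (by omega)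
    exact Nat.or_lt_two_pow (n := 13) h1 ih

lemma testBit_maskOf_fin (S : Finset (Fin 13)) (i : Fin 13) :
    (maskOf S).testBit (i : ℕ) = decide (i ∈ S) := by
  rw [testBit_maskOf]
  simp [Fin.val_inj]

/-! ### counting lemmas -/

lemma and_and_one (x y : ℕ) : x &&& y &&& 1 = ((x &&& y).testBit 0).toNat := by
  rw [Nat.and_one_is_mod, Nat.testBit_zero]
  rcases Nat.mod_two_eq_zero_or_one (x &&& y) with h | h <;> simp [h]

lemma and_one_toNat (x : ℕ) : x &&& 1 = (x.testBit 0).toNat := by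
  rw [Nat.and_one_is_mod, Nat.testBit_zero]
  rcases Nat.mod_two_eq_zero_or_one x with h | h <;> simp [h]

lemma cntN_eq (m : ℕ) : cntN m =
    (m.testBit 0 && m.testBit 6).toNat + (m.testBit 1 && m.testBit 6).toNat +
    (m.testBit 2 && m.testBit 6).toNat + (m.testBit 0 && m.testBit 7).toNat +
    (m.testBit 3 && m.testBit 7).toNat + (m.testBit 4 && m.testBit 7).toNat +
    (m.testBit 0 && m.testBit 8).toNat + (m.testBit 5 && m.testBit 8).toNat +
    (m.testBit 1 && m.testBit 9).toNat + (m.testBit 3 && m.testBit 9).toNat +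
    (m.testBit 5 && m.testBit 9).toNat + (m.testBit 1 && m.testBit 10).toNat +
    (m.testBit 4 && m.testBit 10).toNat + (m.testBit 2 && m.testBit 11).toNat +
    (m.testBit 3 && m.testBit 11).toNat + (m.testBit 2 && m.testBit 12).toNat +
    (m.testBit 4 && m.testBit 12).toNat + (m.testBit 5 && m.testBit 12).toNat := by
  unfold cntN
  simp only [and_and_one, Nat.testBit_land, Nat.testBit_shiftRight, Nat.add_zero]

lemma popN_eq (m : ℕ) : popN m =
    (m.testBit 0).toNat + (m.testBit 1).toNat + (m.testBit 2).toNat + (m.testBit 3).toNat +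
    (m.testBit 4).toNat + (m.testBit 5).toNat + (m.testBit 6).toNat + (m.testBit 7).toNat +
    (m.testBit 8).toNat + (m.testBit 9).toNat + (m.testBit 10).toNat + (m.testBit 11).toNat +
    (m.testBit 12).toNat := by
  unfold popN
  simp only [and_one_toNat, Nat.testBit_shiftRight, Nat.add_zero]

/-- general counting lemma -/
lemma card_filter_toFinset_le {α : Type*} [DecidableEq α] (l : List α) (p : α → Prop)
    [DecidablePred p] : (l.toFinset.filter p).card ≤ (l.map (fun a => if p a then 1 else 0)).sum := by
  induction l with
  | nil => simp
  | cons a l ih =>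
    rw [List.toFinset_cons, Finset.filter_insert, List.map_cons, List.sum_cons]
    by_cases hp : p a
    · simp only [if_pos hp]
      exact le_trans (Finset.card_insert_le _ _) (by omega)
    · simp only [if_neg hp]
      omega

/-! ### the edge list as Sym2 -/

def fanoSym : List (Sym2 (Fin 13)) := fanoEdges.map (fun p => s(p.1, p.2))

lemma mem_fanoSym_of_edge : ∀ e : Sym2 (Fin 13), e ∈ fanoG.edgeSet → e ∈ fanoSym := by
  decide

theorem fanoG_maxDegree : fanoG.maxDegree = 3 := by decide

theorem fano_mad_le : ∀ H : fanoG.Subgraph, H.verts.Nonempty →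
    (2 * H.edgeSet.ncard : ℚ) / H.verts.ncard ≤ 36 / 13 := by
  classical
  intro H hne
  have hfin : H.verts.Finite := Set.toFinite _
  set S : Finset (Fin 13) := hfin.toFinset with hS
  set M : ℕ := maskOf S with hM
  have hmem : ∀ i : Fin 13, i ∈ S ↔ i ∈ H.verts := fun i => hfin.mem_toFinset
  have hb : ∀ i : Fin 13, M.testBit (i : ℕ) = decide (i ∈ S) := fun i => testBit_maskOf_fin S i
  -- pop equals card
  have hpop : popN M = S.card := by
    have hcard : S.card = ∑ i : Fin 13, if i ∈ S then 1 else 0 := by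
      rw [← Finset.card_filter]
      congr 1
      ext i
      simp
    have hb' : ∀ (j : ℕ) (i : Fin 13), (i : ℕ) = j → (M.testBit j).toNat = if i ∈ S then 1 else 0 := by
      intro j i hij
      rw [← hij, hb i]
      by_cases h : i ∈ S <;> simp [h]
    rw [popN_eq, hcard, sum13 (fun i => if i ∈ S then 1 else 0)]
    rw [hb' 0 0 rfl, hb' 1 1 rfl, hb' 2 2 rfl, hb' 3 3 rfl, hb' 4 4 rfl, hb' 5 5 rfl,
        hb' 6 6 rfl, hb' 7 7 rfl, hb' 8 8 rfl, hb' 9 9 rfl, hb' 10 10 rfl, hb' 11 11 rfl,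
        hb' 12 12 rfl]
  -- edge count bound
  have hcnt : H.edgeSet.ncard ≤ cntN M := by
    have hsub : H.edgeSet ⊆ ↑(fanoSym.toFinset.filter (fun e => ∀ v ∈ e, v ∈ S)) := by
      intro e he
      simp only [Finset.coe_filter, Set.mem_setOf_eq, List.mem_toFinset]
      refine ⟨mem_fanoSym_of_edge e (H.edgeSet_subset he), fun v hv => ?_⟩
      rw [hmem]
      exact SimpleGraph.Subgraph.mem_verts_of_mem_edge he hv
    have h1 : H.edgeSet.ncard ≤ (fanoSym.toFinset.filter (fun e => ∀ v ∈ e, v ∈ S)).card := by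
      have := Set.ncard_le_ncard hsub (Set.toFinite _)
      rwa [Set.ncard_coe_finset] at this
    have h2 := card_filter_toFinset_le fanoSym (fun e => ∀ v ∈ e, v ∈ S)
    have h3 : (fanoSym.map (fun e => if (∀ v ∈ e, v ∈ S) then 1 else 0)).sum = cntN M := by
      have hterm : ∀ (a b : Fin 13) (x y : ℕ), (a:ℕ) = x → (b:ℕ) = y →
          (if (∀ v ∈ s(a, b), v ∈ S) then 1 else 0) = (M.testBit x && M.testBit y).toNat := by
        intro a b x y hx hy
        rw [← hx, ← hy, hb a, hb b]
        by_cases ha : a ∈ S <;> by_cases hbb : b ∈ S <;>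
          simp [ha, hbb, Sym2.mem_iff, Sym2.forall]
      show _ = cntN M
      rw [cntN_eq]
      simp only [fanoSym, fanoEdges, List.map_cons, List.map_nil, List.sum_cons, List.sum_nil]
      rw [hterm 0 6 0 6 rfl rfl, hterm 1 6 1 6 rfl rfl, hterm 2 6 2 6 rfl rfl,
          hterm 0 7 0 7 rfl rfl, hterm 3 7 3 7 rfl rfl, hterm 4 7 4 7 rfl rfl,
          hterm 0 8 0 8 rfl rfl, hterm 5 8 5 8 rfl rfl, hterm 1 9 1 9 rfl rfl,
          hterm 3 9 3 9 rfl rfl, hterm 5 9 5 9 rfl rfl, hterm 1 10 1 10 rfl rfl,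
          hterm 4 10 4 10 rfl rfl, hterm 2 11 2 11 rfl rfl, hterm 3 11 3 11 rfl rfl,
          hterm 2 12 2 12 rfl rfl, hterm 4 12 4 12 rfl rfl, hterm 5 12 5 12 rfl rfl]
      simp only [Nat.add_assoc, Nat.add_zero]
    omega
  have hkey := check_all M (maskOf_lt S)
  have hv : H.verts.ncard = S.card := Set.ncard_eq_toFinset_card _ hfin
  have hpos : 0 < S.card := Finset.card_pos.mpr (by rwa [hfin.toFinset_nonempty])
  rw [hv]
  have hSpos : (0:ℚ) < (S.card : ℚ) := by exact_mod_cast hpos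
  rw [div_le_div_iff₀ hSpos (by norm_num)]
  have hfinal : 26 * H.edgeSet.ncard ≤ 36 * S.card := by
    calc 26 * H.edgeSet.ncard ≤ 26 * cntN M := by omega
    _ ≤ 36 * popN M := hkey
    _ = 36 * S.card := by rw [hpop]
  have : (26 * H.edgeSet.ncard : ℚ) ≤ 36 * S.card := by exact_mod_cast hfinal
  nlinarith [this]

/-! ### mad equality at the full graph -/

lemma fanoG_edgeFinset_card : fanoG.edgeFinset.card = 18 := by decide

theorem fano_mad_eq : ∃ H : fanoG.Subgraph, H.verts.Nonempty ∧
    (2 * H.edgeSet.ncard : ℚ) / H.verts.ncard = 36 / 13 := by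
  classical
  refine ⟨⊤, ⟨0, trivial⟩, ?_⟩
  have h1 : (⊤ : fanoG.Subgraph).edgeSet.ncard = 18 := by
    rw [SimpleGraph.Subgraph.edgeSet_top]
    rw [Set.ncard_eq_toFinset_card' fanoG.edgeSet]
    rw [show fanoG.edgeSet.toFinset = fanoG.edgeFinset from rfl]
    exact fanoG_edgeFinset_card
  have h2 : (⊤ : fanoG.Subgraph).verts.ncard = 13 := by
    rw [SimpleGraph.Subgraph.verts_top, Set.ncard_univ]
    simp [Nat.card_eq_fintype_card]
  rw [h1, h2]
  norm_num

/-! ### injective chromatic number -/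

def fanoCol : Fin 13 → Fin 6 :=
  fun v => [0,1,2,3,4,5,1,2,0,3,0,0,4].getD v.val 0

lemma fanoCol_inj : IsInjColoring fanoG fanoCol := by
  have h : ∀ ⦃u v : Fin 13⦄, u ≠ v → (∃ w, fanoG.Adj u w ∧ fanoG.Adj v w) →
      fanoCol u ≠ fanoCol v := by decide
  exact h

lemma six_le_of_inj {k : ℕ} (c : Fin 13 → Fin k) (hc : IsInjColoring fanoG c) : 6 ≤ k := by
  have hcommon : ∀ i j : Fin 6, i ≠ j →
      ∃ w, fanoG.Adj (Fin.castLE (by norm_num) i) w ∧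
           fanoG.Adj (Fin.castLE (by norm_num) j) w := by decide
  have hinj : Function.Injective (fun i : Fin 6 => c (Fin.castLE (by norm_num) i)) := by
    intro i j hij
    by_contra hne
    have hne' : (Fin.castLE (by norm_num : 6 ≤ 13) i) ≠ (Fin.castLE (by norm_num) j) :=
      fun h => hne (Fin.castLE_injective _ h)
    exact hc hne' (hcommon i j hne) hij
  simpa using Fintype.card_le_of_injective _ hinj

theorem fano_chrom : injChromNum fanoG = 6 := by
  apply le_antisymm
  · exact Nat.sInf_le ⟨fanoCol, fanoCol_inj⟩
  · exact le_csInf ⟨6, fanoCol, fanoCol_inj⟩ (fun k hk => by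
      obtain ⟨c, hc⟩ := hk
      exact six_le_of_inj c hc)

/-! ### the main theorem -/

theorem exists_graph_maxDegree_three_mad_eq_and_injChromNum_six :
    ∃ (n : ℕ) (G : SimpleGraph (Fin n)) (_ : DecidableRel G.Adj),
      G.maxDegree = 3 ∧
      (∀ H : G.Subgraph, H.verts.Nonempty →
        (2 * H.edgeSet.ncard : ℚ) / H.verts.ncard ≤ 36 / 13) ∧
      (∃ H : G.Subgraph, H.verts.Nonempty ∧
        (2 * H.edgeSet.ncard : ℚ) / H.verts.ncard = 36 / 13) ∧
      injChromNum G = 6 :=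
  ⟨13, fanoG, fanoAdjDec, fanoG_maxDegree, fano_mad_le, fano_mad_eq, fano_chrom⟩
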